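/- Let Γ be a finitely generated group with the U-property: there exist g₁,…,g_p ∈ Γ and constants A, B > 0 with ‖γ‖ ≤ A·sup_i ℓ(g_i γ) + B for all γ ∈ Γ, where ‖·‖ is word length and ℓ is the translation length in the Cayley graph. If Γ acts by isometries on a metric space Y and the action is well-displacing (d_Y(γ) ≥ α·ℓ(γ) − β for constants α, β > 0, where d_Y(γ) = inf_{x} d(x, γx)), then for any x ∈ Y the orbit map γ ↦ γx is a quasi-isometric embedding of Γ (with the word metric) into Y. -/

import Mathlib

/-- The word length of `γ` with respect to a generating set `S`. -/
noncomputable def wordLength {G : Type*} [Group G] (S : Set G) (γ : G) : ℕ :=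
  sInf {n | ∃ l : List G, (∀ s ∈ l, s ∈ S) ∧ l.length = n ∧ l.prod = γ}

/-- The translation length in the Cayley graph: the conjugacy-minimal word length. -/
noncomputable def stableLength {G : Type*} [Group G] (S : Set G) (γ : G) : ℕ :=
  sInf {n | ∃ η : G, wordLength S (η * γ * η⁻¹) = n}

private lemma sup_cast_le {p : ℕ} (f : Fin p → ℕ) (M : ℝ) (hM : 0 ≤ M)
    (h : ∀ i, (f i : ℝ) ≤ M) : ((Finset.univ.sup f : ℕ) : ℝ) ≤ M := by
  rcases Nat.eq_zero_or_pos p with h0 | hp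
  · subst h0
    simp [Finset.univ_eq_empty]
    exact hM
  · obtain ⟨i, _, hi⟩ := Finset.exists_mem_eq_sup Finset.univ
      (by simpa [Finset.univ_nonempty_iff] using Fin.pos_iff_nonempty.mp hp) f
    rw [hi]; exact h i

/-- Let `Γ` be finitely generated with the U-property (there exist
`g₁, …, g_p` and constants `A, B > 0` with `‖γ‖ ≤ A · sup_i ℓ(gᵢγ) + B` for all `γ`).
If `Γ` acts by isometries on a metric space `Y` and the action is well-displacing
(`d_Y(γ) ≥ α·ℓ(γ) − β`), then every orbit map `γ ↦ γ·x` is a quasi-isometric embedding. -/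
theorem stmt4 {Γ Y : Type*} [Group Γ] [MetricSpace Y] [Nonempty Y] [MulAction Γ Y]
    (hiso : ∀ γ : Γ, Isometry (fun y : Y => γ • y))
    (S : Finset Γ) (hSne : S.Nonempty)
    (hsymm : ∀ s ∈ S, s⁻¹ ∈ S)
    (hgen : Subgroup.closure (S : Set Γ) = ⊤)
    -- the U-property
    (p : ℕ) (g : Fin p → Γ) (A B : ℝ) (hA : 0 < A) (hB : 0 < B)
    (hU : ∀ γ : Γ, (wordLength (S : Set Γ) γ : ℝ) ≤
      A * ((Finset.univ.sup fun i : Fin p => stableLength (S : Set Γ) (g i * γ) : ℕ) : ℝ) + B)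
    -- the action is well-displacing
    (α β : ℝ) (hα : 0 < α) (hβ : 0 < β)
    (hWD : ∀ γ : Γ, α * (stableLength (S : Set Γ) γ : ℝ) - β ≤ ⨅ y : Y, dist y (γ • y)) :
    ∀ x : Y, ∃ A' : ℝ, 0 < A' ∧ ∃ B' : ℝ, 0 < B' ∧ ∀ γ : Γ,
      A'⁻¹ * (wordLength (S : Set Γ) γ : ℝ) - B' ≤ dist x (γ • x) ∧
      dist x (γ • x) ≤ A' * (wordLength (S : Set Γ) γ : ℝ) + B' := by
  intro x
  -- constants
  set Cn : ℕ := S.sup fun s => ⌈dist x (s • x)⌉₊ with hCn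
  set Dn : ℕ := Finset.univ.sup fun i : Fin p => ⌈dist x (g i • x)⌉₊ with hDn
  set C : ℝ := (Cn : ℝ) with hC
  set D : ℝ := (Dn : ℝ) with hD
  have hD0 : 0 ≤ D := Nat.cast_nonneg _
  set A' : ℝ := max (A / α) (max C 1) with hA'
  set B' : ℝ := D + β + B with hB'
  have hA'1 : (1 : ℝ) ≤ A' := le_max_of_le_right (le_max_right _ _)
  have hA'pos : 0 < A' := lt_of_lt_of_le one_pos hA'1
  have hCA' : C ≤ A' := le_max_of_le_right (le_max_left _ _)
  have hAαA' : A / α ≤ A' := le_max_left _ _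
  have hB'pos : 0 < B' := by positivity
  refine ⟨A', hA'pos, B', hB'pos, fun γ => ?_⟩
  -- a word representing γ of length wordLength γ
  have hmemset : wordLength (S : Set Γ) γ ∈
      {n | ∃ l : List Γ, (∀ s ∈ l, s ∈ (S : Set Γ)) ∧ l.length = n ∧ l.prod = γ} := by
    apply Nat.sInf_mem
    have hγ : γ ∈ Subgroup.closure (S : Set Γ) := by rw [hgen]; trivial
    have hγ' : γ ∈ (Subgroup.closure (S : Set Γ)).toSubmonoid := hγ
    rw [Subgroup.closure_toSubmonoid] at hγ'
    obtain ⟨l, hl, hprod⟩ := Submonoid.exists_list_of_mem_closure hγ'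
    refine ⟨l.length, l, fun s hs => ?_, rfl, hprod⟩
    rcases hl s hs with h | h
    · exact h
    · have := hsymm s⁻¹ (by simpa using h)
      simpa using this
  obtain ⟨l, hl, hlen, hprod⟩ := hmemset
  set w : ℝ := (wordLength (S : Set Γ) γ : ℝ) with hw
  have hw0 : 0 ≤ w := Nat.cast_nonneg _
  have hd0 : 0 ≤ dist x (γ • x) := dist_nonneg
  -- upper bound: dist x (γ • x) ≤ C * w
  have hupper : dist x (γ • x) ≤ C * w := by
    rw [← hprod, hw, ← hlen]
    clear hprod hlen
    induction l with
    | nil => simp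
    | cons s t ih =>
      have hs : s ∈ S := hl s List.mem_cons_self
      have ht := ih (fun a ha => hl a (List.mem_cons_of_mem _ ha))
      have h1 : dist x (s • x) ≤ C := by
        calc dist x (s • x) ≤ (⌈dist x (s • x)⌉₊ : ℝ) := Nat.le_ceil _
          _ ≤ C := by rw [hC, hCn, Nat.cast_le]; exact Finset.le_sup (f := fun s => ⌈dist x (s • x)⌉₊) hs
      have h2 : (s :: t).prod • x = s • (t.prod • x) := by
        rw [List.prod_cons, mul_smul]
      calc dist x ((s :: t).prod • x) = dist x (s • (t.prod • x)) := by rw [h2]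
        _ ≤ dist x (s • x) + dist (s • x) (s • (t.prod • x)) := dist_triangle _ _ _
        _ = dist x (s • x) + dist x (t.prod • x) := by
            rw [show dist (s • x) (s • (t.prod • x)) = dist x (t.prod • x) from
              (hiso s).dist_eq x (t.prod • x)]
        _ ≤ C + C * t.length := by linarith
        _ = C * (t.length + 1) := by ring
        _ = C * (s :: t).length := by rw [List.length_cons]; push_cast; ring
  -- lower bound
  have hkey : w ≤ A / α * (dist x (γ • x) + D + β) + B := by
    have hM0 : 0 ≤ (dist x (γ • x) + D + β) / α := by positivity
    have hsup : ((Finset.univ.sup fun i : Fin p =>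
        stableLength (S : Set Γ) (g i * γ) : ℕ) : ℝ) ≤ (dist x (γ • x) + D + β) / α := by
      apply sup_cast_le _ _ hM0
      intro i
      -- displacement bound for g i * γ
      have hinf : (⨅ y : Y, dist y ((g i * γ) • y)) ≤ dist x ((g i * γ) • x) := by
        apply ciInf_le ⟨0, fun r hr => ?_⟩
        obtain ⟨y, rfl⟩ := hr
        exact dist_nonneg
      have hdist : dist x ((g i * γ) • x) ≤ dist x (γ • x) + D := by
        have hDi : dist x (g i • x) ≤ D := by
          calc dist x (g i • x) ≤ (⌈dist x (g i • x)⌉₊ : ℝ) := Nat.le_ceil _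
            _ ≤ D := by
                rw [hD, hDn, Nat.cast_le]
                exact Finset.le_sup (f := fun i => ⌈dist x (g i • x)⌉₊) (Finset.mem_univ i)
        calc dist x ((g i * γ) • x) = dist x (g i • (γ • x)) := by rw [mul_smul]
          _ ≤ dist x (g i • x) + dist (g i • x) (g i • (γ • x)) := dist_triangle _ _ _
          _ = dist x (g i • x) + dist x (γ • x) := by
              rw [show dist (g i • x) (g i • (γ • x)) = dist x (γ • x) from
                (hiso (g i)).dist_eq x (γ • x)]
          _ ≤ dist x (γ • x) + D := by linarith
      have hwd := hWD (g i * γ)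
      have : α * (stableLength (S : Set Γ) (g i * γ) : ℝ) - β ≤ dist x (γ • x) + D :=
        le_trans hwd (le_trans hinf hdist)
      rw [le_div_iff₀ hα]
      linarith
    have := hU γ
    have h2 : A * ((Finset.univ.sup fun i : Fin p =>
        stableLength (S : Set Γ) (g i * γ) : ℕ) : ℝ) ≤ A * ((dist x (γ • x) + D + β) / α) :=
      mul_le_mul_of_nonneg_left hsup hA.le
    rw [hw]
    calc (wordLength (S : Set Γ) γ : ℝ) ≤ _ + B := hU γ
      _ ≤ A * ((dist x (γ • x) + D + β) / α) + B := by linarith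
      _ = A / α * (dist x (γ • x) + D + β) + B := by ring
  constructor
  · rw [sub_le_iff_le_add, inv_mul_le_iff₀ hA'pos]
    have h1 : A / α * (dist x (γ • x) + D + β) ≤ A' * (dist x (γ • x) + D + β) :=
      mul_le_mul_of_nonneg_right hAαA' (by linarith)
    have h2 : B ≤ A' * B := le_mul_of_one_le_left hB.le hA'1
    nlinarith [mul_le_mul_of_nonneg_left hD0 hA'pos.le, mul_le_mul_of_nonneg_left hβ.le hA'pos.le]
  · have : C * w ≤ A' * w := mul_le_mul_of_nonneg_right hCA' hw0
    linarith
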